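/- Under the hypotheses of the previous construction (ξ a solution of (d/ds)((1/κ)ξ') = -κξ + τ√(1-ξ²-((1/κ)ξ')²) with 1-ξ²-((1/κ)ξ')² > 0), the curve α(s) = (∫√(1-ξ²)cos θ ds, ∫√(1-ξ²)sin θ ds, ∫ξ ds), with θ' = κ√(1-ξ²-((1/κ)ξ')²)/(1-ξ²), has curvature |α''(s)| = √(ξ²(ξ')²/(1-ξ²) + κ²(1-ξ²-((1/κ)ξ')²)/(1-ξ²) + (ξ')²) = κ(s). -/

import Mathlib

open Real

/-- The curve built from a solution `ξ` of the nonlinear ODE has curvature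
`|α''| = √(ξ²ξ'²/(1-ξ²) + κ²(1-ξ²-((1/κ)ξ')²)/(1-ξ²) + ξ'²) = κ`. -/
theorem constructed_curve_curvature
    (J : Set ℝ) (hJ : IsOpen J) (hJc : J.OrdConnected)
    (κ τ ξ : ℝ → ℝ)
    (hκ : ContDiffOn ℝ 1 κ J) (hκpos : ∀ s ∈ J, 0 < κ s)
    (hτ : ContinuousOn τ J)
    (hξ : ContDiffOn ℝ 2 ξ J)
    (hcon : ∀ s ∈ J, (ξ s) ^ 2 + (deriv ξ s / κ s) ^ 2 < 1)
    (hode : ∀ s ∈ J, deriv (fun u => deriv ξ u / κ u) s =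
      -κ s * ξ s + τ s * Real.sqrt (1 - (ξ s) ^ 2 - (deriv ξ s / κ s) ^ 2))
    (θ x y z : ℝ → ℝ)
    (hθ : ∀ s ∈ J, HasDerivAt θ
      (κ s * Real.sqrt (1 - (ξ s) ^ 2 - (deriv ξ s / κ s) ^ 2) / (1 - (ξ s) ^ 2)) s)
    (hx : ∀ s ∈ J, HasDerivAt x (Real.sqrt (1 - (ξ s) ^ 2) * Real.cos (θ s)) s)
    (hy : ∀ s ∈ J, HasDerivAt y (Real.sqrt (1 - (ξ s) ^ 2) * Real.sin (θ s)) s)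
    (hz : ∀ s ∈ J, HasDerivAt z (ξ s) s)
    (α : ℝ → EuclideanSpace ℝ (Fin 3))
    (hα : α = fun s => (WithLp.equiv 2 (Fin 3 → ℝ)).symm ![x s, y s, z s]) :
    ∀ s ∈ J,
      ‖deriv (deriv α) s‖ =
        Real.sqrt ((ξ s) ^ 2 * (deriv ξ s) ^ 2 / (1 - (ξ s) ^ 2) +
          (κ s) ^ 2 * (1 - (ξ s) ^ 2 - (deriv ξ s / κ s) ^ 2) / (1 - (ξ s) ^ 2) +
          (deriv ξ s) ^ 2) ∧
      ‖deriv (deriv α) s‖ = κ s := by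
  set L : (Fin 3 → ℝ) →L[ℝ] EuclideanSpace ℝ (Fin 3) :=
    ((PiLp.continuousLinearEquiv 2 ℝ (fun _ : Fin 3 => ℝ)).symm :
      (Fin 3 → ℝ) →L[ℝ] EuclideanSpace ℝ (Fin 3)) with hL
  intro s hs
  have hP : ∀ u ∈ J, 0 < 1 - ξ u ^ 2 := fun u hu => by
    nlinarith [hcon u hu, sq_nonneg (deriv ξ u / κ u)]
  have hW : ∀ u ∈ J, 0 < 1 - ξ u ^ 2 - (deriv ξ u / κ u) ^ 2 := fun u hu => by
    nlinarith [hcon u hu]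
  have hξd : ∀ u ∈ J, HasDerivAt ξ (deriv ξ u) u := fun u hu =>
    (((hξ.differentiableOn (by norm_num)) u hu).differentiableAt (hJ.mem_nhds hu)).hasDerivAt
  have hsq : ∀ u ∈ J, HasDerivAt (fun v => Real.sqrt (1 - ξ v ^ 2))
      (-(ξ u * deriv ξ u) / Real.sqrt (1 - ξ u ^ 2)) u := by
    intro u hu
    have h1 : HasDerivAt (fun v => 1 - ξ v ^ 2) (-(2 * ξ u * deriv ξ u)) u := by
      have h := (hasDerivAt_const u (1 : ℝ)).sub ((hξd u hu).pow 2)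
      simp at h
      exact h
    have h2 := (Real.hasDerivAt_sqrt (ne_of_gt (hP u hu))).comp u h1
    refine h2.congr_deriv ?_
    have : Real.sqrt (1 - ξ u ^ 2) ≠ 0 := Real.sqrt_ne_zero'.2 (hP u hu)
    ring
  have hcosd : ∀ u ∈ J, HasDerivAt (fun v => Real.cos (θ v))
      (-Real.sin (θ u) * (κ u * Real.sqrt (1 - (ξ u) ^ 2 - (deriv ξ u / κ u) ^ 2) /
        (1 - (ξ u) ^ 2))) u := fun u hu =>
    (Real.hasDerivAt_cos (θ u)).comp u (hθ u hu)
  have hsind : ∀ u ∈ J, HasDerivAt (fun v => Real.sin (θ v))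
      (Real.cos (θ u) * (κ u * Real.sqrt (1 - (ξ u) ^ 2 - (deriv ξ u / κ u) ^ 2) /
        (1 - (ξ u) ^ 2))) u := fun u hu =>
    (Real.hasDerivAt_sin (θ u)).comp u (hθ u hu)
  -- first derivative of α on J
  have hα1 : ∀ u ∈ J, HasDerivAt α
      (L ![Real.sqrt (1 - ξ u ^ 2) * Real.cos (θ u),
           Real.sqrt (1 - ξ u ^ 2) * Real.sin (θ u), ξ u]) u := by
    intro u hu
    have hF : HasDerivAt (fun v => (![x v, y v, z v] : Fin 3 → ℝ))
        ![Real.sqrt (1 - ξ u ^ 2) * Real.cos (θ u),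
          Real.sqrt (1 - ξ u ^ 2) * Real.sin (θ u), ξ u] u := by
      apply hasDerivAt_pi.2
      intro i
      fin_cases i
      · simpa using hx u hu
      · simpa using hy u hu
      · simpa using hz u hu
    rw [hα]
    exact L.hasFDerivAt.comp_hasDerivAt u hF
  set a : ℝ := -(ξ s * deriv ξ s) / Real.sqrt (1 - ξ s ^ 2) * Real.cos (θ s) +
    Real.sqrt (1 - ξ s ^ 2) *
      (-Real.sin (θ s) * (κ s * Real.sqrt (1 - (ξ s) ^ 2 - (deriv ξ s / κ s) ^ 2) /
        (1 - (ξ s) ^ 2))) with ha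
  set b : ℝ := -(ξ s * deriv ξ s) / Real.sqrt (1 - ξ s ^ 2) * Real.sin (θ s) +
    Real.sqrt (1 - ξ s ^ 2) *
      (Real.cos (θ s) * (κ s * Real.sqrt (1 - (ξ s) ^ 2 - (deriv ξ s / κ s) ^ 2) /
        (1 - (ξ s) ^ 2))) with hb
  -- second derivative at s
  have hβ : HasDerivAt (fun u => L ![Real.sqrt (1 - ξ u ^ 2) * Real.cos (θ u),
      Real.sqrt (1 - ξ u ^ 2) * Real.sin (θ u), ξ u])
      (L ![a, b, deriv ξ s]) s := by
    have hF : HasDerivAt (fun u => (![Real.sqrt (1 - ξ u ^ 2) * Real.cos (θ u),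
        Real.sqrt (1 - ξ u ^ 2) * Real.sin (θ u), ξ u] : Fin 3 → ℝ))
        ![a, b, deriv ξ s] s := by
      apply hasDerivAt_pi.2
      intro i
      fin_cases i
      · have h := (hsq s hs).mul (hcosd s hs)
        simp at h
        simp [ha]
        exact h
      · have h := (hsq s hs).mul (hsind s hs)
        simp [hb]
        exact h
      · simpa using hξd s hs
    exact L.hasFDerivAt.comp_hasDerivAt s hF
  have h2 : deriv (deriv α) s = L ![a, b, deriv ξ s] := by
    have heq : deriv α =ᶠ[nhds s] fun u => L ![Real.sqrt (1 - ξ u ^ 2) * Real.cos (θ u),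
        Real.sqrt (1 - ξ u ^ 2) * Real.sin (θ u), ξ u] := by
      filter_upwards [hJ.mem_nhds hs] with u hu
      exact (hα1 u hu).deriv
    rw [heq.deriv_eq]
    exact hβ.deriv
  have hnorm : ‖deriv (deriv α) s‖ = Real.sqrt (a ^ 2 + b ^ 2 + (deriv ξ s) ^ 2) := by
    rw [h2]
    simp [hL, EuclideanSpace.norm_eq, Fin.sum_univ_three, Real.norm_eq_abs, sq_abs]
  -- algebra
  have hPs := hP s hs
  have hWs := hW s hs
  have hks := hκpos s hs
  have htrig : Real.sin (θ s) ^ 2 + Real.cos (θ s) ^ 2 = 1 := Real.sin_sq_add_cos_sq _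
  have hQ2 : Real.sqrt (1 - ξ s ^ 2) * Real.sqrt (1 - ξ s ^ 2) = 1 - ξ s ^ 2 :=
    Real.mul_self_sqrt hPs.le
  have hR2 : Real.sqrt (1 - (ξ s) ^ 2 - (deriv ξ s / κ s) ^ 2) *
      Real.sqrt (1 - (ξ s) ^ 2 - (deriv ξ s / κ s) ^ 2)
      = 1 - (ξ s) ^ 2 - (deriv ξ s / κ s) ^ 2 := Real.mul_self_sqrt hWs.le
  have hQne : Real.sqrt (1 - ξ s ^ 2) ≠ 0 := Real.sqrt_ne_zero'.2 hPs
  have key : a ^ 2 + b ^ 2 + (deriv ξ s) ^ 2 =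
      (ξ s) ^ 2 * (deriv ξ s) ^ 2 / (1 - (ξ s) ^ 2) +
        (κ s) ^ 2 * (1 - (ξ s) ^ 2 - (deriv ξ s / κ s) ^ 2) / (1 - (ξ s) ^ 2) +
        (deriv ξ s) ^ 2 := by
    have hQsq : Real.sqrt (1 - ξ s ^ 2) ^ 2 = 1 - ξ s ^ 2 := Real.sq_sqrt hPs.le
    have hRsq : Real.sqrt (1 - (ξ s) ^ 2 - (deriv ξ s / κ s) ^ 2) ^ 2 =
        1 - (ξ s) ^ 2 - (deriv ξ s / κ s) ^ 2 := Real.sq_sqrt hWs.le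
    have h0 : a ^ 2 + b ^ 2 =
        ((ξ s * deriv ξ s / Real.sqrt (1 - ξ s ^ 2)) ^ 2 +
          (Real.sqrt (1 - ξ s ^ 2) *
            (κ s * Real.sqrt (1 - (ξ s) ^ 2 - (deriv ξ s / κ s) ^ 2) / (1 - (ξ s) ^ 2))) ^ 2) *
          (Real.sin (θ s) ^ 2 + Real.cos (θ s) ^ 2) := by
      rw [ha, hb]
      ring
    have e1 : (ξ s * deriv ξ s / Real.sqrt (1 - ξ s ^ 2)) ^ 2 =
        (ξ s) ^ 2 * (deriv ξ s) ^ 2 / (1 - (ξ s) ^ 2) := by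
      rw [div_pow, hQsq]; ring
    have e2 : (Real.sqrt (1 - ξ s ^ 2) *
          (κ s * Real.sqrt (1 - (ξ s) ^ 2 - (deriv ξ s / κ s) ^ 2) / (1 - (ξ s) ^ 2))) ^ 2 =
        (κ s) ^ 2 * (1 - (ξ s) ^ 2 - (deriv ξ s / κ s) ^ 2) / (1 - (ξ s) ^ 2) := by
      rw [mul_pow, div_pow, mul_pow, hQsq, hRsq]
      field_simp
    rw [h0, htrig, mul_one, e1, e2]
  have goal1 : ‖deriv (deriv α) s‖ =
      Real.sqrt ((ξ s) ^ 2 * (deriv ξ s) ^ 2 / (1 - (ξ s) ^ 2) +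
        (κ s) ^ 2 * (1 - (ξ s) ^ 2 - (deriv ξ s / κ s) ^ 2) / (1 - (ξ s) ^ 2) +
        (deriv ξ s) ^ 2) := by
    rw [hnorm, key]
  refine ⟨goal1, ?_⟩
  rw [goal1]
  have harg : (ξ s) ^ 2 * (deriv ξ s) ^ 2 / (1 - (ξ s) ^ 2) +
      (κ s) ^ 2 * (1 - (ξ s) ^ 2 - (deriv ξ s / κ s) ^ 2) / (1 - (ξ s) ^ 2) +
      (deriv ξ s) ^ 2 = (κ s) ^ 2 := by
    field_simp
    ring
  rw [harg]
  exact Real.sqrt_sq hks.le
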